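/- Let M and N be almost-moon polyominoes related by interchanging adjacent rows R_s (shorter) and R_l (longer), with no other exceptional rows. Let F be a 01-filling of M in which every row has at most one 1, let F' be its coupling filling (obtained by swapping the fillings α of R_s and β of the middle part of R_l), and let G = f_{M,N}(F'), G' = f_{M,N}(F) be the corresponding fillings of N. Then ne(F) = ne(G) or ne(F) = ne(G'). -/

import Mathlib

open Set
open scoped Classical

def Row (P : Set (ℤ × ℤ)) (y : ℤ) : Set ℤ := {x | (x, y) ∈ P}

def Col (P : Set (ℤ × ℤ)) (x : ℤ) : Set ℤ := {y | (x, y) ∈ P}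

def RowConvex (P : Set (ℤ × ℤ)) : Prop :=
  ∀ y x₁ x₂ x, x₁ ∈ Row P y → x₂ ∈ Row P y → x₁ ≤ x → x ≤ x₂ → x ∈ Row P y

def ColConvex (P : Set (ℤ × ℤ)) : Prop :=
  ∀ x y₁ y₂ y, y₁ ∈ Col P x → y₂ ∈ Col P x → y₁ ≤ y → y ≤ y₂ → y ∈ Col P x

def RowsComparable (P : Set (ℤ × ℤ)) : Prop :=
  ∀ y₁ y₂, Row P y₁ ⊆ Row P y₂ ∨ Row P y₂ ⊆ Row P y₁

def ColsComparable (P : Set (ℤ × ℤ)) : Prop :=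
  ∀ x₁ x₂, Col P x₁ ⊆ Col P x₂ ∨ Col P x₂ ⊆ Col P x₁

/-- The length of the row of `P` at height `y` (also: the row sum of a filling). -/
noncomputable def rowLen (P : Set (ℤ × ℤ)) (y : ℤ) : ℕ := (Row P y).ncard

/-- The length of the column of `P` at abscissa `x` (also: the column sum of a filling). -/
noncomputable def colLen (P : Set (ℤ × ℤ)) (x : ℤ) : ℕ := (Col P x).ncard

/-- A row is exceptional if some row strictly above it and some row strictly below it
are strictly longer. -/
def ExceptionalRow (P : Set (ℤ × ℤ)) (y : ℤ) : Prop :=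
  (∃ y' > y, rowLen P y < rowLen P y') ∧ (∃ y' < y, rowLen P y < rowLen P y')

/-- A moon polyomino: finite, row- and column-convex, intersection-free
(any two columns comparable). -/
def MoonPolyomino (P : Set (ℤ × ℤ)) : Prop :=
  P.Finite ∧ RowConvex P ∧ ColConvex P ∧ ColsComparable P

/-- An almost-moon polyomino: finite, rows are intervals, pairwise comparable rows,
and at most one exceptional row. -/
def AlmostMoon (P : Set (ℤ × ℤ)) : Prop :=
  P.Finite ∧ RowConvex P ∧ RowsComparable P ∧
    ∀ y₁ y₂, ExceptionalRow P y₁ → ExceptionalRow P y₂ → y₁ = y₂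

/-- `g` is a northeast chain of size `k` of the filling `F` in the polyomino `P`. -/
def IsNEChain (P F : Set (ℤ × ℤ)) (k : ℕ) (g : Fin k → ℤ × ℤ) : Prop :=
  (∀ r, g r ∈ F) ∧ StrictMono (fun r => (g r).1) ∧ StrictMono (fun r => (g r).2) ∧
    ∀ r s, ((g r).1, (g s).2) ∈ P

/-- The size of the largest northeast chain of the filling `F` in the polyomino `P`. -/
noncomputable def neSize (P F : Set (ℤ × ℤ)) : ℕ :=
  sSup {k | ∃ g : Fin k → ℤ × ℤ, IsNEChain P F k g}

/-- Interchange the rows at heights `y₁` and `y₂`. -/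
def rswap (y₁ y₂ : ℤ) (c : ℤ × ℤ) : ℤ × ℤ :=
  (c.1, if c.2 = y₁ then y₂ else if c.2 = y₂ then y₁ else c.2)

/-- The row-swap map on fillings: cells in columns of `S` (the support of the short row)
stay put, while the overhang cells of the long row are moved between heights `y₁`, `y₂`. -/
noncomputable def fswap (S : Set ℤ) (y₁ y₂ : ℤ) (F : Set (ℤ × ℤ)) : Set (ℤ × ℤ) :=
  (fun c => if c.1 ∈ S then c else rswap y₁ y₂ c) '' F

section ChainMachinery

abbrev Cell := ℤ × ℤ

/-- increasing set of cells: distinct rows, row-order implies column-order. -/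
def Incr (T : Finset Cell) : Prop :=
  ∀ c ∈ T, ∀ c' ∈ T, (c.2 < c'.2 → c.1 < c'.1) ∧ (c.2 = c'.2 → c = c')

/-- set form of a NE chain. -/
def IsCS (P H : Set Cell) (T : Finset Cell) : Prop :=
  (∀ c ∈ T, c ∈ H) ∧ Incr T ∧ ∀ c ∈ T, ∀ c' ∈ T, (c.1, c'.2) ∈ P

lemma IsCS.subset {P H : Set Cell} {T T' : Finset Cell} (h : IsCS P H T) (hsub : T' ⊆ T) :
    IsCS P H T' :=
  ⟨fun c hc => h.1 c (hsub hc), fun c hc c' hc' => h.2.1 c (hsub hc) c' (hsub hc'),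
   fun c hc c' hc' => h.2.2 c (hsub hc) c' (hsub hc')⟩

lemma Incr.colLt {T : Finset Cell} (h : Incr T) {c c' : Cell} (hc : c ∈ T) (hc' : c' ∈ T)
    (hlt : c.2 < c'.2) : c.1 < c'.1 := (h c hc c' hc').1 hlt

lemma Incr.rowInj {T : Finset Cell} (h : Incr T) {c c' : Cell} (hc : c ∈ T) (hc' : c' ∈ T)
    (he : c.2 = c'.2) : c = c' := (h c hc c' hc').2 he

/-- from a function chain to a chain set. -/
lemma exists_isCS_of_chain {P H : Set Cell} {k : ℕ} {g : Fin k → Cell}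
    (h : IsNEChain P H k g) : ∃ T : Finset Cell, IsCS P H T ∧ T.card = k := by
  obtain ⟨hmem, hx, hy, hc⟩ := h
  refine ⟨Finset.image g Finset.univ, ⟨?_, ?_, ?_⟩, ?_⟩
  · intro c hc'
    obtain ⟨i, _, rfl⟩ := Finset.mem_image.1 hc'
    exact hmem i
  · intro c hc' c' hc''
    obtain ⟨i, _, rfl⟩ := Finset.mem_image.1 hc'
    obtain ⟨j, _, rfl⟩ := Finset.mem_image.1 hc''
    constructor
    · intro hlt
      have hij : i < j := by
        by_contra hij
        push_neg at hij
        rcases lt_or_eq_of_le hij with hij | hij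
        · have := hy hij
          simp only at this
          omega
        · subst hij; omega
      exact hx hij
    · intro he
      have : i = j := hy.injective he
      subst this; rfl
  · intro c hc' c' hc''
    obtain ⟨i, _, rfl⟩ := Finset.mem_image.1 hc'
    obtain ⟨j, _, rfl⟩ := Finset.mem_image.1 hc''
    exact hc i j
  · rw [Finset.card_image_of_injective _ (fun i j hij => hy.injective (congrArg Prod.snd hij))]
    simp

/-- from a chain set to a function chain. -/
lemma exists_chain_of_isCS {P H : Set Cell} {T : Finset Cell} (h : IsCS P H T) :
    ∃ g : Fin T.card → Cell, IsNEChain P H T.card g := by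
  classical
  obtain ⟨hmem, hincr, hcorner⟩ := h
  set R : Finset ℤ := T.image Prod.snd with hR
  have hcard : R.card = T.card := by
    rw [hR]
    apply Finset.card_image_of_injOn
    intro c hc c' hc' he
    exact hincr.rowInj hc hc' he
  have hex : ∀ y ∈ R, ∃ c, c ∈ T ∧ c.2 = y := by
    intro y hy
    obtain ⟨c, hc, rfl⟩ := Finset.mem_image.1 hy
    exact ⟨c, hc, rfl⟩
  choose f hf1 hf2 using hex
  have e : Fin T.card ≃o R := R.orderIsoOfFin hcard
  refine ⟨fun i => f (e i) (e i).2, ?_, ?_, ?_, ?_⟩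
  · intro i; exact hmem _ (hf1 _ _)
  · intro i j hij
    have h2 : (f (e i) (e i).2).2 < (f (e j) (e j).2).2 := by
      rw [hf2, hf2]; exact_mod_cast e.strictMono hij
    exact hincr.colLt (hf1 _ _) (hf1 _ _) h2
  · intro i j hij
    simp only
    rw [hf2, hf2]
    exact_mod_cast e.strictMono hij
  · intro i j
    exact hcorner _ (hf1 _ _) _ (hf1 _ _)

lemma chainSizes_bddAbove {P H : Set Cell} (hH : H.Finite) :
    BddAbove {k | ∃ g : Fin k → Cell, IsNEChain P H k g} := by
  refine ⟨hH.toFinset.card, fun k hk => ?_⟩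
  obtain ⟨g, hg⟩ := hk
  obtain ⟨T, hT, hTk⟩ := exists_isCS_of_chain hg
  rw [← hTk]
  exact Finset.card_le_card (fun c hc => hH.mem_toFinset.2 (hT.1 c hc))

lemma empty_isCS (P H : Set Cell) : IsCS P H (∅ : Finset Cell) := by
  refine ⟨?_, ?_, ?_⟩ <;> intro c hc <;> simp at hc

lemma isCS_card_le_neSize {P H : Set Cell} (hH : H.Finite) {T : Finset Cell}
    (h : IsCS P H T) : T.card ≤ neSize P H := by
  apply le_csSup (chainSizes_bddAbove hH)
  obtain ⟨g, hg⟩ := exists_chain_of_isCS h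
  exact ⟨g, hg⟩

lemma exists_max_isCS (P H : Set Cell) (hH : H.Finite) :
    ∃ T : Finset Cell, IsCS P H T ∧ T.card = neSize P H := by
  have hne : {k | ∃ g : Fin k → Cell, IsNEChain P H k g}.Nonempty := by
    refine ⟨0, fun i => i.elim0, fun i => i.elim0, fun i j h => i.elim0,
      fun i j h => i.elim0, fun i j => i.elim0⟩
  have := Nat.sSup_mem hne (chainSizes_bddAbove hH)
  obtain ⟨g, hg⟩ := this
  obtain ⟨T, hT, hTk⟩ := exists_isCS_of_chain hg
  exact ⟨T, hT, hTk⟩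

/-- two fillings have the same neSize as soon as they have same-size chain sets. -/
lemma neSize_eq_of_maps {P₁ H₁ P₂ H₂ : Set Cell} (h₁ : H₁.Finite) (h₂ : H₂.Finite)
    (f : ∀ T : Finset Cell, IsCS P₁ H₁ T → ∃ T', IsCS P₂ H₂ T' ∧ T'.card = T.card)
    (g : ∀ T : Finset Cell, IsCS P₂ H₂ T → ∃ T', IsCS P₁ H₁ T' ∧ T'.card = T.card) :
    neSize P₁ H₁ = neSize P₂ H₂ := by
  apply le_antisymm
  · obtain ⟨T, hT, hTk⟩ := exists_max_isCS P₁ H₁ h₁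
    obtain ⟨T', hT', hTk'⟩ := f T hT
    rw [← hTk, ← hTk']
    exact isCS_card_le_neSize h₂ hT'
  · obtain ⟨T, hT, hTk⟩ := exists_max_isCS P₂ H₂ h₂
    obtain ⟨T', hT', hTk'⟩ := g T hT
    rw [← hTk, ← hTk']
    exact isCS_card_le_neSize h₁ hT'

end ChainMachinery

section SwapGeometry

lemma rswap_invol (ys yl : ℤ) (c : Cell) : rswap ys yl (rswap ys yl c) = c := by
  obtain ⟨x, r⟩ := c
  simp only [rswap]
  split_ifs <;> simp_all <;> omega

lemma rswap_fst (ys yl : ℤ) (c : Cell) : (rswap ys yl c).1 = c.1 := rfl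

lemma rswap_inj (ys yl : ℤ) : Function.Injective (rswap ys yl) := by
  intro c c' h
  have := congrArg (rswap ys yl) h
  rwa [rswap_invol, rswap_invol] at this

lemma mem_rswap_image {ys yl : ℤ} {P : Set Cell} {c : Cell} :
    c ∈ rswap ys yl '' P ↔ rswap ys yl c ∈ P := by
  constructor
  · rintro ⟨d, hd, rfl⟩
    rwa [rswap_invol]
  · intro h
    exact ⟨rswap ys yl c, h, rswap_invol ys yl c⟩

lemma rswap_row_eq {ys yl r : ℤ} (hr : r ≠ ys) (hr' : r ≠ yl) (c : Cell) (hc : c.2 = r) :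
    rswap ys yl c = c := by
  obtain ⟨x, r'⟩ := c
  simp only at hc
  subst hc
  simp [rswap, hr, hr']

lemma rswap_snd_ys {ys yl : ℤ} (x : ℤ) : rswap ys yl (x, ys) = (x, yl) := by
  simp [rswap]

lemma rswap_snd_yl {ys yl : ℤ} (hne : yl ≠ ys) (x : ℤ) : rswap ys yl (x, yl) = (x, ys) := by
  simp [rswap, hne]

/-- row finiteness -/
lemma row_finite {M : Set Cell} (hfin : M.Finite) (r : ℤ) : (Row M r).Finite := by
  have : Row M r = (fun x => (x, r)) ⁻¹' M := rfl
  rw [this]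
  exact Set.Finite.preimage (fun a _ b _ h => by simpa using congrArg Prod.fst h) hfin

lemma row_subset_of_len_le {M : Set Cell} (hfin : M.Finite) (hcomp : RowsComparable M)
    {r r' : ℤ} (h : rowLen M r ≤ rowLen M r') : Row M r ⊆ Row M r' := by
  rcases hcomp r r' with hsub | hsub
  · exact hsub
  · have heq : Row M r' = Row M r :=
      Set.eq_of_subset_of_ncard_le hsub h (row_finite hfin r)
    rw [← heq]

/-- chains transfer across a row swap provided they do not meet both swapped rows. -/
lemma rswap_transfer {ys yl : ℤ} (hadj : yl = ys + 1) {P Q Hp : Set Cell}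
    (hQ : ∀ c : Cell, c ∈ Q ↔ rswap ys yl c ∈ P)
    {T : Finset Cell} (hT : IsCS P Hp T)
    (hsp : ¬((∃ c ∈ T, c.2 = ys) ∧ (∃ c ∈ T, c.2 = yl))) :
    IsCS Q (rswap ys yl '' Hp) (T.image (rswap ys yl)) ∧
      (T.image (rswap ys yl)).card = T.card := by
  have hordrow : ∀ c ∈ T, ∀ c' ∈ T, c.2 < c'.2 →
      (rswap ys yl c).2 < (rswap ys yl c').2 := by
    intro c hc c' hc' hlt
    simp only [rswap]
    by_cases h1 : c.2 = ys
    · have hnyl : ∀ d ∈ T, d.2 ≠ yl := by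
        intro d hd hdyl
        exact hsp ⟨⟨c, hc, h1⟩, ⟨d, hd, hdyl⟩⟩
      have := hnyl c' hc'
      simp only [h1, if_pos rfl]
      split_ifs <;> omega
    · by_cases h2 : c.2 = yl
      · have hnys : ∀ d ∈ T, d.2 ≠ ys := by
          intro d hd hdys
          exact hsp ⟨⟨d, hd, hdys⟩, ⟨c, hc, h2⟩⟩
        have := hnys c' hc'
        simp only [h2]
        split_ifs <;> omega
      · simp only [if_neg h1, if_neg h2]
        split_ifs <;> omega
  refine ⟨⟨?_, ?_, ?_⟩, ?_⟩
  · intro c hc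
    obtain ⟨d, hd, rfl⟩ := Finset.mem_image.1 hc
    exact ⟨d, hT.1 d hd, rfl⟩
  · intro c hc c' hc'
    obtain ⟨d, hd, rfl⟩ := Finset.mem_image.1 hc
    obtain ⟨d', hd', rfl⟩ := Finset.mem_image.1 hc'
    constructor
    · intro hlt
      have hdd : d.2 < d'.2 := by
        rcases lt_trichotomy d.2 d'.2 with h | h | h
        · exact h
        · exfalso; rw [show d = d' from hT.2.1.rowInj hd hd' h] at hlt; omega
        · exact absurd (hordrow d' hd' d hd h) (by omega)
      rw [rswap_fst, rswap_fst]
      exact hT.2.1.colLt hd hd' hdd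
    · intro he
      have : d = d' := rswap_inj ys yl (by
        have h1 : (rswap ys yl d).1 = (rswap ys yl d').1 := by
          by_contra hne
          rcases lt_trichotomy d.2 d'.2 with h | h | h
          · exact absurd (hordrow d hd d' hd' h) (by omega)
          · exact hne (by rw [show d = d' from hT.2.1.rowInj hd hd' h])
          · exact absurd (hordrow d' hd' d hd h) (by omega)
        exact Prod.ext h1 he)
      rw [this]
  · intro c hc c' hc'
    obtain ⟨d, hd, rfl⟩ := Finset.mem_image.1 hc
    obtain ⟨d', hd', rfl⟩ := Finset.mem_image.1 hc'
    rw [hQ]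
    have hkey : rswap ys yl ((rswap ys yl d).1, (rswap ys yl d').2) = (d.1, d'.2) := by
      have : ((rswap ys yl d).1, (rswap ys yl d').2)
          = (rswap ys yl (d.1, d'.2)) := by
        simp [rswap]
      rw [this, rswap_invol]
    rw [hkey]
    exact hT.2.2 d hd d' hd'
  · exact Finset.card_image_of_injective _ (rswap_inj ys yl)

end SwapGeometry

section Core

lemma Incr.mono {T T' : Finset Cell} (h : Incr T) (hs : T' ⊆ T) : Incr T' :=
  fun c hc c' hc' => h c (hs hc) c' (hs hc')

lemma Incr.insert_bottom {Z : Finset Cell} (hZ : Incr Z) {c0 : Cell}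
    (hrow : ∀ c ∈ Z, c0.2 < c.2) (hcol : ∀ c ∈ Z, c0.1 < c.1) : Incr (insert c0 Z) := by
  intro c hc c' hc'
  rcases Finset.mem_insert.1 hc with hc0 | hcZ <;> rcases Finset.mem_insert.1 hc' with hc0' | hcZ'
  · constructor
    · intro h; rw [hc0, hc0'] at h; exact absurd h (lt_irrefl _)
    · intro _; rw [hc0, hc0']
  · constructor
    · intro _; rw [hc0]; exact hcol c' hcZ'
    · intro h; rw [hc0] at h; exact absurd h (by have := hrow c' hcZ'; omega)
  · constructor
    · intro h; rw [hc0'] at h; exact absurd h (by have := hrow c hcZ; omega)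
    · intro h; rw [hc0'] at h; exact absurd h (by have := hrow c hcZ; omega)
  · exact hZ c hcZ c' hcZ'

lemma Incr.insert_cell {Z : Finset Cell} (hZ : Incr Z) {c0 : Cell}
    (h : ∀ c ∈ Z, (c.2 < c0.2 → c.1 < c0.1) ∧ (c0.2 < c.2 → c0.1 < c.1) ∧ c.2 ≠ c0.2) :
    Incr (insert c0 Z) := by
  intro c hc c' hc'
  rcases Finset.mem_insert.1 hc with hc0 | hcZ <;> rcases Finset.mem_insert.1 hc' with hc0' | hcZ'
  · constructor
    · intro hlt; rw [hc0, hc0'] at hlt; exact absurd hlt (lt_irrefl _)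
    · intro _; rw [hc0, hc0']
  · constructor
    · intro hlt; rw [hc0] at hlt ⊢; exact (h c' hcZ').2.1 hlt
    · intro he; rw [hc0] at he; exact absurd he.symm (h c' hcZ').2.2
  · constructor
    · intro hlt; rw [hc0'] at hlt ⊢; exact (h c hcZ).1 hlt
    · intro he; rw [hc0'] at he; exact absurd he (h c hcZ).2.2
  · exact hZ c hcZ c' hcZ'

lemma Incr.union {Z₁ Z₂ : Finset Cell} (h1 : Incr Z₁) (h2 : Incr Z₂)
    (hcr : ∀ c ∈ Z₁, ∀ c' ∈ Z₂, c.2 < c'.2 ∧ c.1 < c'.1) : Incr (Z₁ ∪ Z₂) := by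
  intro c hc c' hc'
  rcases Finset.mem_union.1 hc with hcm | hcm <;> rcases Finset.mem_union.1 hc' with hcm' | hcm'
  · exact h1 c hcm c' hcm'
  · obtain ⟨hr, hcl⟩ := hcr c hcm c' hcm'
    exact ⟨fun _ => hcl, fun he => absurd he (by omega)⟩
  · obtain ⟨hr, hcl⟩ := hcr c' hcm' c hcm
    exact ⟨fun hlt => absurd hlt (by omega), fun he => absurd he (by omega)⟩
  · exact h2 c hcm c' hcm'

lemma disjoint_of_rows {Z₁ Z₂ : Finset Cell}
    (hcr : ∀ c ∈ Z₁, ∀ c' ∈ Z₂, c.2 < c'.2) : Disjoint Z₁ Z₂ := by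
  rw [Finset.disjoint_left]
  intro c hc hc'
  exact absurd (hcr c hc c hc') (lt_irrefl _)

/-- The bottom-structure contradiction lemma (two interleaved increasing sequences). -/
lemma core_aux (xb : ℤ) :
    ∀ n : ℕ, ∀ A B : Finset Cell,
      A.card + B.card ≤ n →
      A.Nonempty → B.Nonempty → Incr A → Incr B →
      (∀ a ∈ A, ∀ e ∈ B, a.2 = e.2 → a = e) →
      (∀ e ∈ B, e.1 < xb) →
      (∀ Z : Finset Cell, Z ⊆ A ∪ B → Incr Z →
        (∀ c ∈ Z, ∃ e ∈ B, e.1 ≤ c.1) → Z.card ≤ B.card) →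
      (∀ Z : Finset Cell, Z ⊆ A ∪ B → Incr Z →
        (∀ c ∈ Z, (c ∈ A ∧ c.1 < xb) ∨ (c ∈ B ∧ ∃ a ∈ A, a.2 < c.2)) →
        Z.card + 1 ≤ A.card) →
      False := by
  intro n
  induction n with
  | zero =>
    intro A B hn hA _ _ _ _ _ _ _
    have := Finset.card_pos.2 hA
    omega
  | succ n ih =>
    intro A B hn hA hB hIA hIB hcross hBcol H1 H2
    obtain ⟨d1, hd1A, hd1min⟩ := A.exists_min_image Prod.snd hA
    obtain ⟨e1, he1B, he1min⟩ := B.exists_min_image Prod.snd hB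
    have hd1col : ∀ a ∈ A, d1.1 ≤ a.1 := by
      intro a ha
      rcases eq_or_ne a d1 with h | hne
      · rw [h]
      · have : d1.2 < a.2 := by
          rcases lt_or_eq_of_le (hd1min a ha) with h | h
          · exact h
          · exact absurd (hIA.rowInj ha hd1A h.symm) hne
        exact le_of_lt (hIA.colLt hd1A ha this)
    have hd1rowlt : ∀ a ∈ A, a ≠ d1 → d1.2 < a.2 := by
      intro a ha hne
      rcases lt_or_eq_of_le (hd1min a ha) with h | h
      · exact h
      · exact absurd (hIA.rowInj ha hd1A h.symm) hne
    have he1rowlt : ∀ e ∈ B, e ≠ e1 → e1.2 < e.2 := by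
      intro e he hne
      rcases lt_or_eq_of_le (he1min e he) with h | h
      · exact h
      · exact absurd (hIB.rowInj he he1B h.symm) hne
    have he1cols : ∀ e ∈ B, e ≠ e1 → e1.1 < e.1 := fun e he hne =>
      hIB.colLt he1B he (he1rowlt e he hne)
    have he1col : ∀ e ∈ B, e1.1 ≤ e.1 := by
      intro e he
      rcases eq_or_ne e e1 with h | hne
      · rw [h]
      · exact le_of_lt (he1cols e he hne)
    by_cases hcase1 : xb ≤ d1.1
    · -- Case B : the bottom A-cell has a large column
      have hd1nB : d1 ∉ B := fun h => absurd (hBcol d1 h) (by omega)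
      set Bl := B.filter (fun e => e.2 < d1.2) with hBl
      set Bh := B.filter (fun e => d1.2 < e.2) with hBh
      have hBsplit : ∀ e ∈ B, e.2 < d1.2 ∨ d1.2 < e.2 := by
        intro e he
        rcases lt_trichotomy e.2 d1.2 with h | h | h
        · exact Or.inl h
        · exact absurd (hcross d1 hd1A e he h.symm) (fun hh => hd1nB (hh ▸ he))
        · exact Or.inr h
      have hdisj : Disjoint Bl A := by
        rw [Finset.disjoint_left]
        intro c hc hcA
        have h1 := (Finset.mem_filter.1 hc).2
        have := hd1min c hcA
        omega
      have h1call : Bl.card + A.card ≤ B.card := by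
        have := H1 (Bl ∪ A) ?_ ?_ ?_
        · rwa [Finset.card_union_of_disjoint hdisj] at this
        · intro c hc
          rcases Finset.mem_union.1 hc with hc | hc
          · exact Finset.mem_union_right _ ((Finset.mem_filter.1 hc).1)
          · exact Finset.mem_union_left _ hc
        · intro c hc c' hc'
          rcases Finset.mem_union.1 hc with hc | hc <;>
            rcases Finset.mem_union.1 hc' with hc' | hc'
          · exact hIB c (Finset.mem_filter.1 hc).1 c' (Finset.mem_filter.1 hc').1
          · constructor
            · intro _
              have h1 := hBcol c (Finset.mem_filter.1 hc).1
              have h2 := hd1col c' hc'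
              omega
            · intro he
              exfalso
              have h1 := (Finset.mem_filter.1 hc).2
              have h2 := hd1min c' hc'
              omega
          · constructor
            · intro hlt
              exfalso
              have h1 := (Finset.mem_filter.1 hc').2
              have h2 := hd1min c hc
              omega
            · intro he
              exfalso
              have h1 := (Finset.mem_filter.1 hc').2
              have h2 := hd1min c hc
              omega
          · exact hIA c hc c' hc'
        · intro c hc
          rcases Finset.mem_union.1 hc with hc | hc
          · exact ⟨c, (Finset.mem_filter.1 hc).1, le_refl _⟩
          · refine ⟨e1, he1B, ?_⟩
            have h1 := hBcol e1 he1B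
            have h2 := hd1col c hc
            omega
      have h2call : Bh.card + 1 ≤ A.card := by
        apply H2 Bh
        · intro c hc
          exact Finset.mem_union_right _ (Finset.mem_filter.1 hc).1
        · exact hIB.mono (Finset.filter_subset _ _)
        · intro c hc
          exact Or.inr ⟨(Finset.mem_filter.1 hc).1, d1, hd1A, (Finset.mem_filter.1 hc).2⟩
      have hBcard : B.card ≤ Bl.card + Bh.card := by
        calc B.card ≤ (Bl ∪ Bh).card := by
              apply Finset.card_le_card
              intro e he
              rcases hBsplit e he with h | h
              · exact Finset.mem_union_left _ (Finset.mem_filter.2 ⟨he, h⟩)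
              · exact Finset.mem_union_right _ (Finset.mem_filter.2 ⟨he, h⟩)
          _ ≤ Bl.card + Bh.card := Finset.card_union_le _ _
      omega
    · push_neg at hcase1
      by_cases hcase2 : ∀ e ∈ B, d1.1 < e.1
      · -- Case A : peel d1
        rcases Nat.lt_or_ge A.card 2 with hA1 | hA2
        · have := H2 {d1} (by simp [hd1A])
            (by
              intro c hc c' hc'
              simp only [Finset.mem_singleton] at hc hc'
              rw [hc, hc']
              exact ⟨fun h => absurd h (lt_irrefl _), fun _ => rfl⟩)
            (by intro c hc
                simp only [Finset.mem_singleton] at hc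
                rw [hc]
                exact Or.inl ⟨hd1A, hcase1⟩)
          simp only [Finset.card_singleton] at this
          omega
        · have hd1nB : d1 ∉ B := fun h => absurd (hcase2 d1 h) (lt_irrefl _)
          set A' := A.erase d1 with hA'
          have hA'card : A'.card = A.card - 1 := Finset.card_erase_of_mem hd1A
          have hA'ne : A'.Nonempty := Finset.card_pos.1 (by omega)
          refine ih A' B (by omega) hA'ne hB (hIA.mono (Finset.erase_subset _ _)) hIB
            (fun a ha e he h => hcross a (Finset.mem_of_mem_erase ha) e he h) hBcol ?_ ?_
          · intro Z hZ hZi hZc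
            refine H1 Z (fun c hc => ?_) hZi hZc
            rcases Finset.mem_union.1 (hZ hc) with h | h
            · exact Finset.mem_union_left _ (Finset.mem_of_mem_erase h)
            · exact Finset.mem_union_right _ h
          · intro Z hZ hZi hZc
            have hd1Z : d1 ∉ Z := by
              intro h
              rcases Finset.mem_union.1 (hZ h) with h' | h'
              · exact (Finset.mem_erase.1 h').1 rfl
              · exact hd1nB h'
            have hrowgt : ∀ c ∈ Z, d1.2 < c.2 := by
              intro c hc
              rcases hZc c hc with ⟨hcA', _⟩ | ⟨hcB, a, haA', hlt⟩
              · exact hd1rowlt c (Finset.mem_of_mem_erase hcA') (Finset.mem_erase.1 hcA').1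
              · have := hd1min a (Finset.mem_of_mem_erase haA')
                omega
            have hcolgt : ∀ c ∈ Z, d1.1 < c.1 := by
              intro c hc
              rcases Finset.mem_union.1 (hZ hc) with h' | h'
              · exact hIA.colLt hd1A (Finset.mem_of_mem_erase h') (hrowgt c hc)
              · exact hcase2 c h'
            have hcall := H2 (insert d1 Z) ?_ (hZi.insert_bottom hrowgt hcolgt) ?_
            · rw [Finset.card_insert_of_notMem hd1Z] at hcall
              omega
            · intro c hc
              rcases Finset.mem_insert.1 hc with hc0 | hc
              · rw [hc0]; exact Finset.mem_union_left _ hd1A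
              · rcases Finset.mem_union.1 (hZ hc) with h' | h'
                · exact Finset.mem_union_left _ (Finset.mem_of_mem_erase h')
                · exact Finset.mem_union_right _ h'
            · intro c hc
              rcases Finset.mem_insert.1 hc with hc0 | hc
              · rw [hc0]; exact Or.inl ⟨hd1A, hcase1⟩
              · rcases hZc c hc with ⟨hcA', hcol⟩ | ⟨hcB, a, haA', hlt⟩
                · exact Or.inl ⟨Finset.mem_of_mem_erase hcA', hcol⟩
                · exact Or.inr ⟨hcB, a, Finset.mem_of_mem_erase haA', hlt⟩
      · push_neg at hcase2
        obtain ⟨e0, he0B, he0le⟩ := hcase2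
        have he1led1 : e1.1 ≤ d1.1 := le_trans (he1col e0 he0B) he0le
        by_cases hw : ∃ e ∈ B, e.2 < d1.2
        · -- Case C1
          obtain ⟨ew, hewB, hewlt⟩ := hw
          have he1row : e1.2 < d1.2 := lt_of_le_of_lt (he1min ew hewB) hewlt
          have he1nA : e1 ∉ A := fun h => absurd (hd1min e1 h) (by omega)
          rcases Nat.lt_or_ge B.card 2 with hB1 | hB2
          · -- B.card = 1
            set Aup := A.filter (fun a => e1.1 < a.1) with hAup
            have he1nAup : e1 ∉ Aup := fun h => he1nA (Finset.mem_filter.1 h).1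
            have h1call : Aup.card + 1 ≤ B.card := by
              have hrow' : ∀ c ∈ Aup, e1.2 < c.2 := fun c hc =>
                lt_of_lt_of_le he1row (hd1min c (Finset.mem_filter.1 hc).1)
              have hcol' : ∀ c ∈ Aup, e1.1 < c.1 := fun c hc => (Finset.mem_filter.1 hc).2
              have := H1 (insert e1 Aup) ?_
                ((hIA.mono (Finset.filter_subset _ _)).insert_bottom hrow' hcol') ?_
              · rw [Finset.card_insert_of_notMem he1nAup] at this; omega
              · intro c hc
                rcases Finset.mem_insert.1 hc with hc0 | hc
                · rw [hc0]; exact Finset.mem_union_right _ he1B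
                · exact Finset.mem_union_left _ (Finset.mem_filter.1 hc).1
              · intro c hc
                rcases Finset.mem_insert.1 hc with hc0 | hc
                · rw [hc0]; exact ⟨e1, he1B, le_refl _⟩
                · exact ⟨e1, he1B, le_of_lt (Finset.mem_filter.1 hc).2⟩
            have hAup0 : ∀ a ∈ A, a.1 ≤ e1.1 := by
              intro a ha
              by_contra h
              push_neg at h
              have hmem : a ∈ Aup := Finset.mem_filter.2 ⟨ha, h⟩
              have := Finset.card_pos.2 ⟨a, hmem⟩
              omega
            have hBcole1 := hBcol e1 he1B
            have := H2 A Finset.subset_union_left hIA (fun c hc =>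
              Or.inl ⟨hc, by have h1 := hAup0 c hc; omega⟩)
            have := Finset.card_pos.2 hA
            omega
          · -- peel e1
            set B' := B.erase e1 with hB'
            have hB'card : B'.card = B.card - 1 := Finset.card_erase_of_mem he1B
            have hB'ne : B'.Nonempty := Finset.card_pos.1 (by omega)
            refine ih A B' (by omega) hA hB'ne hIA (hIB.mono (Finset.erase_subset _ _))
              (fun a ha e he h => hcross a ha e (Finset.mem_of_mem_erase he) h)
              (fun e he => hBcol e (Finset.mem_of_mem_erase he)) ?_ ?_
            · intro Z hZ hZi hZc
              have he1Z : e1 ∉ Z := by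
                intro h
                rcases Finset.mem_union.1 (hZ h) with h' | h'
                · exact he1nA h'
                · exact (Finset.mem_erase.1 h').1 rfl
              have hcolgt : ∀ c ∈ Z, e1.1 < c.1 := by
                intro c hc
                obtain ⟨e, heB', hle⟩ := hZc c hc
                have := he1cols e (Finset.mem_of_mem_erase heB') (Finset.mem_erase.1 heB').1
                omega
              have hrowgt : ∀ c ∈ Z, e1.2 < c.2 := by
                intro c hc
                rcases Finset.mem_union.1 (hZ hc) with h' | h'
                · exact lt_of_lt_of_le he1row (hd1min c h')
                · exact he1rowlt c (Finset.mem_of_mem_erase h') (Finset.mem_erase.1 h').1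
              have hcall := H1 (insert e1 Z) ?_ (hZi.insert_bottom hrowgt hcolgt) ?_
              · rw [Finset.card_insert_of_notMem he1Z] at hcall
                omega
              · intro c hc
                rcases Finset.mem_insert.1 hc with hc0 | hc
                · rw [hc0]; exact Finset.mem_union_right _ he1B
                · rcases Finset.mem_union.1 (hZ hc) with h' | h'
                  · exact Finset.mem_union_left _ h'
                  · exact Finset.mem_union_right _ (Finset.mem_of_mem_erase h')
              · intro c hc
                rcases Finset.mem_insert.1 hc with hc0 | hc
                · rw [hc0]; exact ⟨e1, he1B, le_refl _⟩
                · obtain ⟨e, heB', hle⟩ := hZc c hc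
                  exact ⟨e, Finset.mem_of_mem_erase heB', hle⟩
            · intro Z hZ hZi hZc
              refine H2 Z (fun c hc => ?_) hZi (fun c hc => ?_)
              · rcases Finset.mem_union.1 (hZ hc) with h' | h'
                · exact Finset.mem_union_left _ h'
                · exact Finset.mem_union_right _ (Finset.mem_of_mem_erase h')
              · rcases hZc c hc with ⟨h1, h2⟩ | ⟨h1, a, ha, hlt⟩
                · exact Or.inl ⟨h1, h2⟩
                · exact Or.inr ⟨Finset.mem_of_mem_erase h1, a, ha, hlt⟩
        · -- Case C0
          push_neg at hw
          have h2call : B.card + 1 ≤ A.card := by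
            apply H2 B Finset.subset_union_right hIB
            intro c hc
            by_cases he : c.2 = d1.2
            · have hcd : d1 = c := hcross d1 hd1A c hc he.symm
              exact Or.inl ⟨hcd ▸ hd1A, by rw [← hcd]; exact hcase1⟩
            · refine Or.inr ⟨hc, d1, hd1A, ?_⟩
              have := hw c hc
              omega
          have h1call : A.card ≤ B.card := by
            apply H1 A Finset.subset_union_left hIA
            intro c hc
            exact ⟨e1, he1B, le_trans he1led1 (hd1col c hc)⟩
          omega

end Core

section Main

lemma rswap_image_invol (ys yl : ℤ) (X : Set Cell) :
    rswap ys yl '' (rswap ys yl '' X) = X := by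
  ext c
  rw [mem_rswap_image, mem_rswap_image, rswap_invol]

lemma cell_eq_row {c : Cell} {r : ℤ} (h : c.2 = r) : c = (c.1, r) := Prod.ext rfl h

lemma main_orient (M N : Set Cell) (ys yl : ℤ)
    (hMfin : M.Finite) (hconv : RowConvex M) (hcomp : RowsComparable M)
    (hadj : yl = ys + 1)
    (hsub : Row M ys ⊆ Row M yl)
    (hNdef : N = rswap ys yl '' M)
    (hexM : ∀ y, ExceptionalRow M y → y = ys ∨ y = yl)
    (F : Set Cell) (hF : F ⊆ M) (hrow : ∀ y, rowLen F y ≤ 1)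
    (G G' : Set Cell)
    (hG : G = rswap ys yl '' F)
    (hG' : G' = (fun c => if c.1 ∈ Row M ys then c else rswap ys yl c) '' F) :
    neSize M F = neSize N G ∨ neSize M F = neSize N G' := by
  classical
  set S := Row M ys with hS
  set L := Row M yl with hL
  have hylys : yl ≠ ys := by omega
  have hNmem : ∀ c : Cell, c ∈ N ↔ rswap ys yl c ∈ M := by
    intro c; rw [hNdef]; exact mem_rswap_image
  have hMmem : ∀ c : Cell, c ∈ M ↔ rswap ys yl c ∈ N := by
    intro c
    rw [hNmem, rswap_invol]
  have hNys : ∀ x, ((x, ys) ∈ N ↔ x ∈ L) := by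
    intro x
    rw [hNmem, rswap_snd_ys]
    exact Iff.rfl
  have hNyl : ∀ x, ((x, yl) ∈ N ↔ x ∈ S) := by
    intro x
    rw [hNmem, rswap_snd_yl hylys]
    exact Iff.rfl
  have hNo : ∀ x r, r ≠ ys → r ≠ yl → ((x, r) ∈ N ↔ (x, r) ∈ M) := by
    intro x r h1 h2
    rw [hNmem, rswap_row_eq h1 h2 (x, r) rfl]
  have hFfin : F.Finite := hMfin.subset hF
  have hNfin : N.Finite := hNdef ▸ hMfin.image _
  have hGfin : G.Finite := hG ▸ hFfin.image _
  have hG'fin : G'.Finite := hG' ▸ hFfin.image _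
  have hGF : rswap ys yl '' G = F := by rw [hG, rswap_image_invol]
  -- uniqueness of the cell in each row of F
  have huniq : ∀ y x x', (x, y) ∈ F → (x', y) ∈ F → x = x' := by
    intro y x x' hx hx'
    by_contra hne
    have hsubp : ({x, x'} : Set ℤ) ⊆ Row F y := by
      intro z hz
      rcases hz with rfl | hz
      · exact hx
      · rw [Set.mem_singleton_iff] at hz
        rw [hz]
        exact hx'
    have h2 : ({x, x'} : Set ℤ).ncard = 2 := Set.ncard_pair hne
    have := Set.ncard_le_ncard hsubp (row_finite hFfin y)
    rw [h2] at this
    have := hrow y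
    unfold rowLen at this
    omega
  by_cases hC : ∃ x1 x2, (x1, ys) ∈ F ∧ (x2, yl) ∈ F ∧ x2 ∈ S ∧ x1 ≠ x2
  · -- condition C holds
    obtain ⟨xa, xb, ha, hb, hxbS, hne⟩ := hC
    have hxaS : xa ∈ S := hF ha
    have hxbL : xb ∈ L := hF hb
    have hysM : ∀ c : Cell, c ∈ M → c.2 = ys → c.1 ∈ S := by
      intro c hc hcy
      have : (c.1, ys) ∈ M := by rw [← cell_eq_row hcy]; exact hc
      exact this
    have hG'F : G' = F := by
      rw [hG']
      ext c
      constructor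
      · rintro ⟨d, hd, rfl⟩
        by_cases hdS : d.1 ∈ S
        · simpa [hdS] using hd
        · simp only [if_neg hdS]
          have heq : rswap ys yl d = d := by
            apply rswap_row_eq _ _ d rfl
            · intro h
              exact hdS (hysM d (hF hd) h)
            · intro h
              have hdF : (d.1, yl) ∈ F := by rw [← cell_eq_row h]; exact hd
              have : d.1 = xb := huniq yl d.1 xb hdF hb
              exact hdS (this ▸ hxbS)
          rw [heq]
          exact hd
      · intro hcF
        refine ⟨c, hcF, ?_⟩
        by_cases hcS : c.1 ∈ S
        · simp [hcS]
        · simp only [if_neg hcS]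
          apply rswap_row_eq _ _ c rfl
          · intro h
            exact hcS (hysM c (hF hcF) h)
          · intro h
            have hcF' : (c.1, yl) ∈ F := by rw [← cell_eq_row h]; exact hcF
            have : c.1 = xb := huniq yl c.1 xb hcF' hb
            exact hcS (this ▸ hxbS)
    -- transfers
    have trMS2G' : ∀ T : Finset Cell, IsCS M F T → (∀ c ∈ T, c.1 ∈ S) → IsCS N G' T := by
      intro T hT hcols
      refine ⟨fun c hc => by rw [hG'F]; exact hT.1 c hc, hT.2.1, ?_⟩
      intro c hc c' hc'
      by_cases h1 : c'.2 = ys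
      · rw [h1]; exact (hNys _).2 (hsub (hcols c hc))
      by_cases h2 : c'.2 = yl
      · rw [h2]; exact (hNyl _).2 (hcols c hc)
      · exact (hNo _ _ h1 h2).2 (hT.2.2 c hc c' hc')
    have trG'2M : ∀ T : Finset Cell, IsCS N G' T → (∀ c ∈ T, c.2 ≠ ys) → IsCS M F T := by
      intro T hT hno
      refine ⟨fun c hc => by rw [← hG'F]; exact hT.1 c hc, hT.2.1, ?_⟩
      intro c hc c' hc'
      by_cases h2 : c'.2 = yl
      · rw [h2]
        have hcor := hT.2.2 c hc c' hc'
        rw [h2] at hcor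
        exact hsub ((hNyl _).1 hcor)
      · exact (hNo _ _ (hno c' hc') h2).1 (hT.2.2 c hc c' hc')
    have trBase2G : ∀ T : Finset Cell, IsCS M F T → (∀ c ∈ T, c.2 ≠ ys ∧ c.2 ≠ yl) →
        IsCS N G T := by
      intro T hT hno
      refine ⟨fun c hc => ?_, hT.2.1, ?_⟩
      · rw [hG, mem_rswap_image, rswap_row_eq (hno c hc).1 (hno c hc).2 c rfl]
        exact hT.1 c hc
      · intro c hc c' hc'
        exact (hNo _ _ (hno c' hc').1 (hno c' hc').2).2 (hT.2.2 c hc c' hc')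
    have hyscell : ∀ c ∈ F, c.2 = ys → c = (xa, ys) := by
      intro c hc hcy
      have h1 : c.1 = xa := huniq ys c.1 xa (by rw [← cell_eq_row hcy]; exact hc) ha
      rw [cell_eq_row hcy, h1]
    have hylcell : ∀ c ∈ F, c.2 = yl → c = (xb, yl) := by
      intro c hc hcy
      have h1 : c.1 = xb := huniq yl c.1 xb (by rw [← cell_eq_row hcy]; exact hc) hb
      rw [cell_eq_row hcy, h1]
    rcases lt_or_gt_of_ne hne with hxab | hxab
    · -- xa < xb
      have hGleM : neSize N G ≤ neSize M F := by
        obtain ⟨T, hT, hTc⟩ := exists_max_isCS N G hGfin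
        rw [← hTc]
        have hsp : ¬((∃ c ∈ T, c.2 = ys) ∧ (∃ c ∈ T, c.2 = yl)) := by
          rintro ⟨⟨c, hc, hcy⟩, ⟨c', hc', hcy'⟩⟩
          have hcF : (c.1, yl) ∈ F := by
            have h := hT.1 c hc
            rw [hG, mem_rswap_image, cell_eq_row hcy, rswap_snd_ys] at h
            exact h
          have hc'F : (c'.1, ys) ∈ F := by
            have h := hT.1 c' hc'
            rw [hG, mem_rswap_image, cell_eq_row hcy', rswap_snd_yl hylys] at h
            exact h
          have h1 : c.1 = xb := huniq yl c.1 xb hcF hb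
          have h2 : c'.1 = xa := huniq ys c'.1 xa hc'F ha
          have : c.1 < c'.1 := hT.2.1.colLt hc hc' (by omega)
          omega
        obtain ⟨hcs, hcard⟩ := rswap_transfer hadj hMmem hT hsp
        rw [hGF] at hcs
        rw [← hcard]
        exact isCS_card_le_neSize hFfin hcs
      by_cases hMG : neSize M F = neSize N G
      · exact Or.inl hMG
      have hgt : neSize N G < neSize M F := lt_of_le_of_ne hGleM (fun h => hMG h.symm)
      right
      obtain ⟨T, hT, hTc⟩ := exists_max_isCS M F hFfin
      have hbo : (∃ c ∈ T, c.2 = ys) ∧ (∃ c ∈ T, c.2 = yl) := by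
        by_contra hsp
        obtain ⟨hcs, hcard⟩ := rswap_transfer hadj hNmem hT hsp
        have hle := isCS_card_le_neSize hGfin (hG ▸ hcs)
        rw [hcard, hTc] at hle
        omega
      obtain ⟨⟨ca, hcaT, hcay⟩, _⟩ := hbo
      have hcols : ∀ c ∈ T, c.1 ∈ S := by
        intro c hc
        have hcor := hT.2.2 c hc ca hcaT
        rw [hcay] at hcor
        exact hcor
      have hle1 : neSize M F ≤ neSize N G' := by
        rw [← hTc]
        exact isCS_card_le_neSize hG'fin (trMS2G' T hT hcols)
      have hle2 : neSize N G' ≤ neSize M F := by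
        obtain ⟨V, hV, hVc⟩ := exists_max_isCS N G' hG'fin
        rw [← hVc]
        by_cases hys : ∃ c ∈ V, c.2 = ys
        · obtain ⟨cA, hcAV, hcAy⟩ := hys
          have hcAF : cA ∈ F := by rw [← hG'F]; exact hV.1 cA hcAV
          have hcAa : cA = (xa, ys) := hyscell cA hcAF hcAy
          by_cases hyl : ∃ c ∈ V, c.2 = yl
          · obtain ⟨cB, hcBV, hcBy⟩ := hyl
            have hcolsV : ∀ c ∈ V, c.1 ∈ S := by
              intro c hc
              have hcor := hV.2.2 c hc cB hcBV
              rw [hcBy] at hcor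
              exact (hNyl _).1 hcor
            have hVM : IsCS M F V := by
              refine ⟨fun c hc => by rw [← hG'F]; exact hV.1 c hc, hV.2.1, ?_⟩
              intro c hc c' hc'
              by_cases h1 : c'.2 = ys
              · rw [h1]; exact hcolsV c hc
              by_cases h2 : c'.2 = yl
              · rw [h2]; exact hsub (hcolsV c hc)
              · exact (hNo _ _ h1 h2).1 (hV.2.2 c hc c' hc')
            exact isCS_card_le_neSize hFfin hVM
          · push_neg at hyl
            have hDno : ∀ c ∈ V.erase cA, c.2 ≠ ys ∧ c.2 ≠ yl := by
              intro c hc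
              refine ⟨?_, hyl c (Finset.mem_of_mem_erase hc)⟩
              intro h
              have hcF : c ∈ F := by
                rw [← hG'F]; exact hV.1 c (Finset.mem_of_mem_erase hc)
              exact (Finset.mem_erase.1 hc).1 ((hyscell c hcF h).trans hcAa.symm)
            have hDM : IsCS M F (V.erase cA) :=
              trG'2M _ (hV.subset (Finset.erase_subset _ _)) (fun c hc => (hDno c hc).1)
            have hDG : IsCS N G (V.erase cA) := trBase2G _ hDM hDno
            have h1 := isCS_card_le_neSize hGfin hDG
            have h2 : (V.erase cA).card = V.card - 1 := Finset.card_erase_of_mem hcAV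
            have h3 : 0 < V.card := Finset.card_pos.2 ⟨cA, hcAV⟩
            omega
        · push_neg at hys
          exact isCS_card_le_neSize hFfin (trG'2M V hV hys)
      exact le_antisymm hle1 hle2
    · -- xb < xa
      have hMleG : neSize M F ≤ neSize N G := by
        obtain ⟨T, hT, hTc⟩ := exists_max_isCS M F hFfin
        rw [← hTc]
        have hsp : ¬((∃ c ∈ T, c.2 = ys) ∧ (∃ c ∈ T, c.2 = yl)) := by
          rintro ⟨⟨c, hc, hcy⟩, ⟨c', hc', hcy'⟩⟩
          have h1 : c = (xa, ys) := hyscell c (hT.1 c hc) hcy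
          have h2 : c' = (xb, yl) := hylcell c' (hT.1 c' hc') hcy'
          have h3 : c.1 < c'.1 := hT.2.1.colLt hc hc' (by omega)
          have h4 : c.1 = xa := by rw [h1]
          have h5 : c'.1 = xb := by rw [h2]
          omega
        obtain ⟨hcs, hcard⟩ := rswap_transfer hadj hNmem hT hsp
        rw [← hcard]
        exact isCS_card_le_neSize hGfin (hG ▸ hcs)
      by_cases hMG : neSize M F = neSize N G
      · exact Or.inl hMG
      have hgt : neSize M F < neSize N G := lt_of_le_of_ne hMleG hMG
      right
      obtain ⟨W, hW, hWc⟩ := exists_max_isCS N G hGfin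
      have hWpos : 0 < W.card := by omega
      have hbo : (∃ c ∈ W, c.2 = ys) ∧ (∃ c ∈ W, c.2 = yl) := by
        by_contra hsp
        obtain ⟨hcs, hcard⟩ := rswap_transfer hadj hMmem hW hsp
        rw [hGF] at hcs
        have hle := isCS_card_le_neSize hFfin hcs
        rw [hcard, hWc] at hle
        omega
      obtain ⟨⟨cb, hcbW, hcby⟩, ⟨ca, hcaW, hcay⟩⟩ := hbo
      have hcbG : (cb.1, yl) ∈ F := by
        have h := hW.1 cb hcbW
        rw [hG, mem_rswap_image, cell_eq_row hcby, rswap_snd_ys] at h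
        exact h
      have hcaG : (ca.1, ys) ∈ F := by
        have h := hW.1 ca hcaW
        rw [hG, mem_rswap_image, cell_eq_row hcay, rswap_snd_yl hylys] at h
        exact h
      have hcb1 : cb.1 = xb := huniq yl cb.1 xb hcbG hb
      have hca1 : ca.1 = xa := huniq ys ca.1 xa hcaG ha
      have hWcolS : ∀ c ∈ W, c.1 ∈ S := by
        intro c hc
        have hcor := hW.2.2 c hc ca hcaW
        rw [hcay] at hcor
        exact (hNyl _).1 hcor
      have hWcov : ∀ c ∈ W, ∀ c' ∈ W, c'.2 ≠ ys → c'.2 ≠ yl → c.1 ∈ Row M c'.2 := by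
        intro c hc c' hc' h1 h2
        exact (hNo _ _ h1 h2).1 (hW.2.2 c hc c' hc')
      have hstrip : neSize N G ≤ neSize M F + 1 := by
        have hsp : ¬((∃ c ∈ W.erase ca, c.2 = ys) ∧ (∃ c ∈ W.erase ca, c.2 = yl)) := by
          rintro ⟨_, ⟨c, hc, hcy⟩⟩
          have : c = ca := hW.2.1.rowInj (Finset.mem_of_mem_erase hc) hcaW (by rw [hcy, hcay])
          exact (Finset.mem_erase.1 hc).1 this
        obtain ⟨hcs, hcard⟩ :=
          rswap_transfer hadj hMmem (hW.subset (Finset.erase_subset _ _)) hsp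
        rw [hGF] at hcs
        have hle := isCS_card_le_neSize hFfin hcs
        rw [hcard, Finset.card_erase_of_mem hcaW] at hle
        omega
      have hEqG : neSize N G = neSize M F + 1 := by omega
      have hge : neSize M F ≤ neSize N G' := by
        have hnys : ∀ c ∈ W.erase cb, c.2 ≠ ys := by
          intro c hc h
          exact (Finset.mem_erase.1 hc).1
            (hW.2.1.rowInj (Finset.mem_of_mem_erase hc) hcbW (by rw [h, hcby]))
        have hsp : ¬((∃ c ∈ W.erase cb, c.2 = ys) ∧ (∃ c ∈ W.erase cb, c.2 = yl)) := by
          rintro ⟨⟨c, hc, hcy⟩, _⟩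
          exact hnys c hc hcy
        obtain ⟨hcs, hcard⟩ :=
          rswap_transfer hadj hMmem (hW.subset (Finset.erase_subset _ _)) hsp
        rw [hGF] at hcs
        have hcolsT : ∀ c ∈ (W.erase cb).image (rswap ys yl), c.1 ∈ S := by
          intro c hc
          obtain ⟨d, hd, rfl⟩ := Finset.mem_image.1 hc
          rw [rswap_fst]
          exact hWcolS d (Finset.mem_of_mem_erase hd)
        have hle2 := isCS_card_le_neSize hG'fin (trMS2G' _ hcs hcolsT)
        rw [hcard, Finset.card_erase_of_mem hcbW, hWc] at hle2
        omega
      have hle : neSize N G' ≤ neSize M F := by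
        obtain ⟨V, hV, hVc⟩ := exists_max_isCS N G' hG'fin
        rw [← hVc]
        by_cases hys : ∃ c ∈ V, c.2 = ys
        · obtain ⟨cA, hcAV, hcAy⟩ := hys
          have hcAF : cA ∈ F := by rw [← hG'F]; exact hV.1 cA hcAV
          have hcA1 : cA.1 = xa := huniq ys cA.1 xa (by rw [← cell_eq_row hcAy]; exact hcAF) ha
          have hnyl : ∀ c ∈ V, c.2 ≠ yl := by
            intro c hc h
            have hcF : c ∈ F := by rw [← hG'F]; exact hV.1 c hc
            have hc1 : c.1 = xb := huniq yl c.1 xb (by rw [← cell_eq_row h]; exact hcF) hb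
            have hclt := hV.2.1.colLt hcAV hc (by omega)
            omega
          by_contra hbig
          push_neg at hbig
          -- merge configuration
          have hDnoys : ∀ c ∈ V.erase cA, c.2 ≠ ys := by
            intro c hc h
            exact (Finset.mem_erase.1 hc).1
              (hV.2.1.rowInj (Finset.mem_of_mem_erase hc) hcAV (by rw [h, hcAy]))
          set D := V.erase cA with hDdef
          have hDno : ∀ c ∈ D, c.2 ≠ ys ∧ c.2 ≠ yl :=
            fun c hc => ⟨hDnoys c hc, hnyl c (Finset.mem_of_mem_erase hc)⟩
          have hDM : IsCS M F D := trG'2M D (hV.subset (Finset.erase_subset _ _)) hDnoys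
          have hDle : D.card ≤ neSize M F := isCS_card_le_neSize hFfin hDM
          have hDcardV : D.card = V.card - 1 := Finset.card_erase_of_mem hcAV
          have hVpos : 0 < V.card := Finset.card_pos.2 ⟨cA, hcAV⟩
          have hDk : D.card = neSize M F := by omega
          have hVk : V.card = neSize M F + 1 := by omega
          have hcacb : ca ≠ cb := by
            intro h
            have h2 : ca.2 = cb.2 := by rw [h]
            rw [hcay, hcby] at h2
            omega
          set E := (W.erase cb).erase ca with hEdef
          have hcaW' : ca ∈ W.erase cb := Finset.mem_erase.2 ⟨hcacb, hcaW⟩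
          have hEcard : E.card + 2 = W.card := by
            rw [hEdef, Finset.card_erase_of_mem hcaW', Finset.card_erase_of_mem hcbW]
            have h2 : 1 < W.card := Finset.one_lt_card.2 ⟨ca, hcaW, cb, hcbW, hcacb⟩
            omega
          have hEk : E.card + 1 = neSize M F := by omega
          have hEW : E ⊆ W := (Finset.erase_subset _ _).trans (Finset.erase_subset _ _)
          have hEno : ∀ c ∈ E, c.2 ≠ ys ∧ c.2 ≠ yl := by
            intro c hc
            constructor
            · intro h
              have heq : c = cb := hW.2.1.rowInj (hEW hc) hcbW (by rw [h, hcby])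
              rw [hEdef] at hc
              exact (Finset.mem_erase.1 (Finset.mem_of_mem_erase hc)).1 heq
            · intro h
              have heq : c = ca := hW.2.1.rowInj (hEW hc) hcaW (by rw [h, hcay])
              rw [hEdef] at hc
              exact (Finset.mem_erase.1 hc).1 heq
          have hEF : ∀ c ∈ E, c ∈ F := by
            intro c hc
            have h := hW.1 c (hEW hc)
            rwa [hG, mem_rswap_image, rswap_row_eq (hEno c hc).1 (hEno c hc).2 c rfl] at h
          have hEcolS : ∀ c ∈ E, c.1 ∈ S := fun c hc => hWcolS c (hEW hc)
          have hDrows : ∀ c ∈ D, c.2 < ys ∨ yl < c.2 := by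
            intro c hc
            have h := hDno c hc
            omega
          have hErows : ∀ c ∈ E, c.2 < ys ∨ yl < c.2 := by
            intro c hc
            have h := hEno c hc
            omega
          have hDcolL : ∀ c ∈ D, c.1 ∈ L := by
            intro c hc
            have hcor := hV.2.2 c (Finset.mem_of_mem_erase hc) cA hcAV
            rw [hcAy] at hcor
            exact (hNys _).1 hcor
          have hDcov : ∀ c ∈ V, ∀ c' ∈ D, c.1 ∈ Row M c'.2 := by
            intro c hc c' hc'
            exact (hNo _ _ (hDno c' hc').1 (hDno c' hc').2).1
              (hV.2.2 c hc c' (Finset.mem_of_mem_erase hc'))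
          have hDordlo : ∀ c ∈ D, c.2 < ys → c.1 < xa := by
            intro c hc h
            have hclt := hV.2.1.colLt (Finset.mem_of_mem_erase hc) hcAV (by omega)
            omega
          have hDordhi : ∀ c ∈ D, yl < c.2 → xa < c.1 := by
            intro c hc h
            have hclt := hV.2.1.colLt hcAV (Finset.mem_of_mem_erase hc) (by omega)
            omega
          have hEordlo : ∀ c ∈ E, c.2 < ys → c.1 < xb := by
            intro c hc h
            have hclt := hW.2.1.colLt (hEW hc) hcbW (by omega)
            omega
          have hEordhi : ∀ c ∈ E, yl < c.2 → xa < c.1 := by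
            intro c hc h
            have hclt := hW.2.1.colLt hcaW (hEW hc) (by omega)
            omega
          -- (t1) some column of D lies outside S
          have hexD : ∃ c ∈ D, c.1 ∉ S := by
            by_contra hall
            push_neg at hall
            have hVM : IsCS M F V := by
              refine ⟨fun c hc => by rw [← hG'F]; exact hV.1 c hc, hV.2.1, ?_⟩
              intro c hc c' hc'
              by_cases h1 : c'.2 = ys
              · rw [h1]
                by_cases hcc : c = cA
                · show c.1 ∈ S
                  rw [hcc, hcA1]
                  exact hxaS
                · exact hall c (Finset.mem_erase.2 ⟨hcc, hc⟩)
              by_cases h2 : c'.2 = yl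
              · exact absurd h2 (hnyl c' hc')
              · exact (hNo _ _ h1 h2).1 (hV.2.2 c hc c' hc')
            have := isCS_card_le_neSize hFfin hVM
            omega
          obtain ⟨c0, hc0D, hc0S⟩ := hexD
          have hSrow : ∀ c ∈ D, S ⊆ Row M c.2 := by
            intro c hc
            rcases hcomp c.2 ys with hsub' | hsub'
            · exact absurd (hsub' (hDcov c0 (Finset.mem_of_mem_erase hc0D) c hc)) hc0S
            · exact hsub'
          -- (t2) some low cell of D has column ≥ xb
          have hexA : ∃ c ∈ D, c.2 < ys ∧ xb ≤ c.1 := by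
            by_contra hall
            push_neg at hall
            have hbD : ((xb, yl) : Cell) ∉ D := fun h => (hDno _ h).2 rfl
            have hIncr : Incr (insert ((xb, yl) : Cell) D) := by
              apply hDM.2.1.insert_cell
              intro c hc
              refine ⟨?_, ?_, (hDno c hc).2⟩
              · intro h
                have hr := hDrows c hc
                exact hall c hc (by omega)
              · intro h
                have := hDordhi c hc h
                omega
            have hT2 : IsCS M F (insert ((xb, yl) : Cell) D) := by
              refine ⟨?_, hIncr, ?_⟩
              · intro c hc
                rcases Finset.mem_insert.1 hc with h | h
                · rw [h]; exact hb
                · exact hDM.1 c h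
              · intro c hc c' hc'
                rcases Finset.mem_insert.1 hc' with h' | h'
                · rw [h']
                  show (c.1, yl) ∈ M
                  rcases Finset.mem_insert.1 hc with h | h
                  · rw [h]; exact hsub hxbS
                  · exact hDcolL c h
                · rcases Finset.mem_insert.1 hc with h | h
                  · rw [h]
                    exact hSrow c' h' hxbS
                  · exact hDcov c (Finset.mem_of_mem_erase h) c' h'
            have hcard2 := isCS_card_le_neSize hFfin hT2
            rw [Finset.card_insert_of_notMem hbD] at hcard2
            omega
          obtain ⟨dstar, hdD, hdlo, hdcol⟩ := hexA
          have hdcolxa : dstar.1 < xa := hDordlo dstar hdD hdlo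
          set A := D.filter (fun c => c.2 < ys) with hAdef
          set Dp := D.filter (fun c => yl < c.2) with hDpdef
          set B := E.filter (fun c => c.2 < ys) with hBdef
          set Ep := E.filter (fun c => yl < c.2) with hEpdef
          have hAsubD : A ⊆ D := Finset.filter_subset _ _
          have hBsubE : B ⊆ E := Finset.filter_subset _ _
          have hEpsubE : Ep ⊆ E := Finset.filter_subset _ _
          have hDpsubD : Dp ⊆ D := Finset.filter_subset _ _
          have hApart : A.card + Dp.card = D.card := by
            have hDpeq : D.filter (fun c => ¬ c.2 < ys) = Dp := by
              ext c
              simp only [hDpdef, Finset.mem_filter]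
              constructor
              · rintro ⟨h1, h2⟩
                refine ⟨h1, ?_⟩
                rcases hDrows c h1 with h | h
                · omega
                · exact h
              · rintro ⟨h1, h2⟩
                exact ⟨h1, by omega⟩
            rw [hAdef, ← hDpeq]
            exact Finset.card_filter_add_card_filter_not _
          have hEpart : B.card + Ep.card = E.card := by
            have hEpeq : E.filter (fun c => ¬ c.2 < ys) = Ep := by
              ext c
              simp only [hEpdef, Finset.mem_filter]
              constructor
              · rintro ⟨h1, h2⟩
                refine ⟨h1, ?_⟩
                rcases hErows c h1 with h | h
                · omega
                · exact h
              · rintro ⟨h1, h2⟩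
                exact ⟨h1, by omega⟩
            rw [hBdef, ← hEpeq]
            exact Finset.card_filter_add_card_filter_not _
          have hdA : dstar ∈ A := Finset.mem_filter.2 ⟨hdD, hdlo⟩
          -- (t3) : B nonempty
          have hBne : B.Nonempty := by
            by_contra hBe
            rw [Finset.not_nonempty_iff_eq_empty] at hBe
            have hEhi : ∀ c ∈ E, yl < c.2 := by
              intro c hc
              rcases hErows c hc with h | h
              · exfalso
                have hmem : c ∈ B := Finset.mem_filter.2 ⟨hc, h⟩
                rw [hBe] at hmem
                exact absurd hmem (Finset.notMem_empty c)
              · exact h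
            have hEpE : Ep = E := by
              rw [hEpdef]
              exact Finset.filter_true_of_mem hEhi
            have hach : ((xa, ys) : Cell) ∉ Ep := fun h => (hEno _ (hEpsubE h)).1 rfl
            have hIeps : Incr (insert ((xa, ys) : Cell) Ep) := by
              apply (hW.2.1.mono (hEpsubE.trans hEW)).insert_bottom
              · intro c hc
                have h2 := (Finset.mem_filter.1 hc).2
                show ys < c.2
                omega
              · intro c hc
                exact hEordhi c (hEpsubE hc) (Finset.mem_filter.1 hc).2
            have hdins : dstar ∉ insert ((xa, ys) : Cell) Ep := by
              intro h
              rcases Finset.mem_insert.1 h with h | h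
              · have : dstar.2 = ys := by rw [h]
                omega
              · have := (Finset.mem_filter.1 h).2
                omega
            have hIall : Incr (insert dstar (insert ((xa, ys) : Cell) Ep)) := by
              apply hIeps.insert_bottom
              · intro c hc
                rcases Finset.mem_insert.1 hc with h | h
                · rw [h]; exact hdlo
                · have := (Finset.mem_filter.1 h).2
                  omega
              · intro c hc
                rcases Finset.mem_insert.1 hc with h | h
                · rw [h]; exact hdcolxa
                · have := hEordhi c (hEpsubE h) (Finset.mem_filter.1 h).2
                  omega
            have hT3 : IsCS M F (insert dstar (insert ((xa, ys) : Cell) Ep)) := by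
              refine ⟨?_, hIall, ?_⟩
              · intro c hc
                rcases Finset.mem_insert.1 hc with h | h
                · rw [h]; exact hDM.1 dstar hdD
                rcases Finset.mem_insert.1 h with h | h
                · rw [h]; exact ha
                · exact hEF c (hEpsubE h)
              · intro c hc c' hc'
                have hcS : c.1 ∈ S := by
                  rcases Finset.mem_insert.1 hc with h | h
                  · rw [h]
                    exact hconv ys xb xa dstar.1 hxbS hxaS hdcol (le_of_lt hdcolxa)
                  rcases Finset.mem_insert.1 h with h | h
                  · rw [h]; exact hxaS
                  · exact hEcolS c (hEpsubE h)
                rcases Finset.mem_insert.1 hc' with h' | h'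
                · rw [h']
                  exact hSrow dstar hdD hcS
                rcases Finset.mem_insert.1 h' with h' | h'
                · rw [h']
                  exact hcS
                · have hc'E : c' ∈ E := hEpsubE h'
                  have hxbRow : xb ∈ Row M c'.2 := by
                    have h := hWcov cb hcbW c' (hEW hc'E) (hEno c' hc'E).1 (hEno c' hc'E).2
                    rwa [hcb1] at h
                  have hxaRow : xa ∈ Row M c'.2 := by
                    have h := hWcov ca hcaW c' (hEW hc'E) (hEno c' hc'E).1 (hEno c' hc'E).2
                    rwa [hca1] at h
                  rcases Finset.mem_insert.1 hc with h | h
                  · rw [h]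
                    exact hconv c'.2 xb xa dstar.1 hxbRow hxaRow hdcol (le_of_lt hdcolxa)
                  rcases Finset.mem_insert.1 h with h | h
                  · rw [h]; exact hxaRow
                  · exact hWcov c (hEW (hEpsubE h)) c' (hEW hc'E) (hEno c' hc'E).1
                      (hEno c' hc'E).2
            have hc3 := isCS_card_le_neSize hFfin hT3
            rw [Finset.card_insert_of_notMem hdins, Finset.card_insert_of_notMem hach,
              hEpE] at hc3
            omega
          -- CORE hypotheses
          have hIA : Incr A := hDM.2.1.mono hAsubD
          have hIB : Incr B := hW.2.1.mono (hBsubE.trans hEW)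
          have hcross : ∀ a' ∈ A, ∀ e ∈ B, a'.2 = e.2 → a' = e := by
            intro a' ha' e he h
            have h1 : (a'.1, a'.2) ∈ F := by rw [Prod.mk.eta]; exact hDM.1 a' (hAsubD ha')
            have h2 : (e.1, a'.2) ∈ F := by
              rw [h, Prod.mk.eta]; exact hEF e (hBsubE he)
            exact Prod.ext (huniq a'.2 a'.1 e.1 h1 h2) h
          have hBcol : ∀ e ∈ B, e.1 < xb := fun e he =>
            hEordlo e (hBsubE he) (Finset.mem_filter.1 he).2
          have hAlo : ∀ c ∈ A, c.2 < ys := fun c hc => (Finset.mem_filter.1 hc).2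
          have hBlo : ∀ c ∈ B, c.2 < ys := fun c hc => (Finset.mem_filter.1 hc).2
          have hAxa : ∀ c ∈ A, c.1 < xa := fun c hc => hDordlo c (hAsubD hc) (hAlo c hc)
          have H1 : ∀ Z : Finset Cell, Z ⊆ A ∪ B → Incr Z →
              (∀ c ∈ Z, ∃ e ∈ B, e.1 ≤ c.1) → Z.card ≤ B.card := by
            intro Z hZsub hZI hZwit
            have hZF : ∀ c ∈ Z, c ∈ F := by
              intro c hc
              rcases Finset.mem_union.1 (hZsub hc) with h | h
              · exact hDM.1 c (hAsubD h)
              · exact hEF c (hBsubE h)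
            have hZlo : ∀ c ∈ Z, c.2 < ys := by
              intro c hc
              rcases Finset.mem_union.1 (hZsub hc) with h | h
              · exact hAlo c h
              · exact hBlo c h
            have hZxa : ∀ c ∈ Z, c.1 < xa := by
              intro c hc
              rcases Finset.mem_union.1 (hZsub hc) with h | h
              · exact hAxa c h
              · have := hBcol c h
                omega
            have hZS : ∀ c ∈ Z, c.1 ∈ S := by
              intro c hc
              obtain ⟨e, heB, hle⟩ := hZwit c hc
              exact hconv ys e.1 xa c.1 (hEcolS e (hBsubE heB)) hxaS hle
                (le_of_lt (hZxa c hc))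
            have hIZEp : Incr (Z ∪ Ep) := by
              apply hZI.union (hW.2.1.mono (hEpsubE.trans hEW))
              intro c hc c' hc'
              have h1 := hZlo c hc
              have h2 := (Finset.mem_filter.1 hc').2
              have h3 := hZxa c hc
              have h4 := hEordhi c' (hEpsubE hc') h2
              exact ⟨by omega, by omega⟩
            have hach : ((xa, ys) : Cell) ∉ Z ∪ Ep := by
              intro h
              rcases Finset.mem_union.1 h with h | h
              · have := hZlo _ h
                simp only at this
                omega
              · exact (hEno _ (hEpsubE h)).1 rfl
            have hIall : Incr (insert ((xa, ys) : Cell) (Z ∪ Ep)) := by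
              apply hIZEp.insert_cell
              intro c hc
              rcases Finset.mem_union.1 hc with h | h
              · exact ⟨fun _ => hZxa c h, fun hgt => absurd hgt (by have := hZlo c h; omega),
                  by have := hZlo c h; omega⟩
              · have h2 := (Finset.mem_filter.1 h).2
                exact ⟨fun hlt => absurd hlt (by omega), fun _ => hEordhi c (hEpsubE h) h2,
                  by omega⟩
            have hcovE : ∀ c ∈ insert ((xa, ys) : Cell) (Z ∪ Ep), ∀ c' ∈ E,
                (c.1, c'.2) ∈ M := by
              intro c hc c' hc'E
              have hxaRow : xa ∈ Row M c'.2 := by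
                have h := hWcov ca hcaW c' (hEW hc'E) (hEno c' hc'E).1 (hEno c' hc'E).2
                rwa [hca1] at h
              rcases Finset.mem_insert.1 hc with h | h
              · rw [h]; exact hxaRow
              rcases Finset.mem_union.1 h with h | h
              · obtain ⟨e, heB, hle⟩ := hZwit c h
                have heRow : e.1 ∈ Row M c'.2 :=
                  hWcov e (hEW (hBsubE heB)) c' (hEW hc'E) (hEno c' hc'E).1 (hEno c' hc'E).2
                exact hconv c'.2 e.1 xa c.1 heRow hxaRow hle (le_of_lt (hZxa c h))
              · exact hWcov c (hEW (hEpsubE h)) c' (hEW hc'E) (hEno c' hc'E).1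
                  (hEno c' hc'E).2
            have hTZ : IsCS M F (insert ((xa, ys) : Cell) (Z ∪ Ep)) := by
              refine ⟨?_, hIall, ?_⟩
              · intro c hc
                rcases Finset.mem_insert.1 hc with h | h
                · rw [h]; exact ha
                rcases Finset.mem_union.1 h with h | h
                · exact hZF c h
                · exact hEF c (hEpsubE h)
              · intro c hc c' hc'
                have hcS : c.1 ∈ S := by
                  rcases Finset.mem_insert.1 hc with h | h
                  · rw [h]; exact hxaS
                  rcases Finset.mem_union.1 h with h | h
                  · exact hZS c h
                  · exact hEcolS c (hEpsubE h)
                rcases Finset.mem_insert.1 hc' with h' | h'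
                · rw [h']; exact hcS
                rcases Finset.mem_union.1 h' with h' | h'
                · rcases Finset.mem_union.1 (hZsub h') with hA' | hB'
                  · exact hSrow c' (hAsubD hA') hcS
                  · exact hcovE c hc c' (hBsubE hB')
                · exact hcovE c hc c' (hEpsubE h')
            have hZEp_disj : Disjoint Z Ep := disjoint_of_rows (by
              intro c hc c' hc'
              have h1 := hZlo c hc
              have h2 := (Finset.mem_filter.1 hc').2
              omega)
            have hc1 := isCS_card_le_neSize hFfin hTZ
            rw [Finset.card_insert_of_notMem hach,
              Finset.card_union_of_disjoint hZEp_disj] at hc1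
            omega
          have H2 : ∀ Z : Finset Cell, Z ⊆ A ∪ B → Incr Z →
              (∀ c ∈ Z, (c ∈ A ∧ c.1 < xb) ∨ (c ∈ B ∧ ∃ a' ∈ A, a'.2 < c.2)) →
              Z.card + 1 ≤ A.card := by
            intro Z hZsub hZI hZcond
            have hZF : ∀ c ∈ Z, c ∈ F := by
              intro c hc
              rcases Finset.mem_union.1 (hZsub hc) with h | h
              · exact hDM.1 c (hAsubD h)
              · exact hEF c (hBsubE h)
            have hZlo : ∀ c ∈ Z, c.2 < ys := by
              intro c hc
              rcases Finset.mem_union.1 (hZsub hc) with h | h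
              · exact hAlo c h
              · exact hBlo c h
            have hZxb : ∀ c ∈ Z, c.1 < xb := by
              intro c hc
              rcases hZcond c hc with ⟨_, h⟩ | ⟨h, _⟩
              · exact h
              · exact hBcol c h
            have hIZDp : Incr (Z ∪ Dp) := by
              apply hZI.union (hDM.2.1.mono hDpsubD)
              intro c hc c' hc'
              have h1 := hZlo c hc
              have h2 := (Finset.mem_filter.1 hc').2
              have h3 := hZxb c hc
              have h4 := hDordhi c' (hDpsubD hc') h2
              exact ⟨by omega, by omega⟩
            have hbch : ((xb, yl) : Cell) ∉ Z ∪ Dp := by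
              intro h
              rcases Finset.mem_union.1 h with h | h
              · have := hZlo _ h
                simp only at this
                omega
              · exact (hDno _ (hDpsubD h)).2 rfl
            have hIall : Incr (insert ((xb, yl) : Cell) (Z ∪ Dp)) := by
              apply hIZDp.insert_cell
              intro c hc
              rcases Finset.mem_union.1 hc with h | h
              · exact ⟨fun _ => hZxb c h, fun hgt => absurd hgt (by have := hZlo c h; omega),
                  by have := hZlo c h; omega⟩
              · have h2 := (Finset.mem_filter.1 h).2
                refine ⟨fun hlt => absurd hlt (by omega), fun _ => ?_,
                  by omega⟩
                have := hDordhi c (hDpsubD h) h2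
                omega
            have hcLall : ∀ c ∈ insert ((xb, yl) : Cell) (Z ∪ Dp), c.1 ∈ L := by
              intro c hc
              rcases Finset.mem_insert.1 hc with h | h
              · rw [h]; exact hsub hxbS
              rcases Finset.mem_union.1 h with h | h
              · rcases Finset.mem_union.1 (hZsub h) with h2 | h2
                · exact hDcolL c (hAsubD h2)
                · exact hsub (hEcolS c (hBsubE h2))
              · exact hDcolL c (hDpsubD h)
            have hcovD : ∀ c ∈ insert ((xb, yl) : Cell) (Z ∪ Dp), ∀ c' ∈ D,
                (c.1, c'.2) ∈ M := by
              intro c hc c' hc'D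
              rcases Finset.mem_insert.1 hc with h | h
              · rw [h]; exact hSrow c' hc'D hxbS
              rcases Finset.mem_union.1 h with h | h
              · rcases Finset.mem_union.1 (hZsub h) with h2 | h2
                · exact hDcov c (Finset.mem_of_mem_erase (hAsubD h2)) c' hc'D
                · exact hSrow c' hc'D (hEcolS c (hBsubE h2))
              · exact hDcov c (Finset.mem_of_mem_erase (hDpsubD h)) c' hc'D
            have hcovB : ∀ c ∈ insert ((xb, yl) : Cell) (Z ∪ Dp), ∀ c' ∈ B,
                (∃ a' ∈ A, a'.2 < c'.2) → (c.1, c'.2) ∈ M := by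
              rintro c hc c' hc'B ⟨a', ha'A, hlt⟩
              rcases le_or_gt (rowLen M yl) (rowLen M c'.2) with hlen | hlen
              · exact row_subset_of_len_le hMfin hcomp hlen (hcLall c hc)
              · have hr := hBlo c' hc'B
                have hnex : ¬ ExceptionalRow M c'.2 := by
                  intro hex
                  rcases hexM _ hex with h | h <;> omega
                have hble : rowLen M a'.2 ≤ rowLen M c'.2 := by
                  by_contra hcon
                  push_neg at hcon
                  exact hnex ⟨⟨yl, by omega, hlen⟩, ⟨a'.2, hlt, hcon⟩⟩
                exact row_subset_of_len_le hMfin hcomp hble (hcovD c hc a' (hAsubD ha'A))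
            have hTZ : IsCS M F (insert ((xb, yl) : Cell) (Z ∪ Dp)) := by
              refine ⟨?_, hIall, ?_⟩
              · intro c hc
                rcases Finset.mem_insert.1 hc with h | h
                · rw [h]; exact hb
                rcases Finset.mem_union.1 h with h | h
                · exact hZF c h
                · exact hDM.1 c (hDpsubD h)
              · intro c hc c' hc'
                rcases Finset.mem_insert.1 hc' with h' | h'
                · rw [h']
                  exact hcLall c hc
                rcases Finset.mem_union.1 h' with h' | h'
                · rcases hZcond c' h' with ⟨hA', _⟩ | ⟨hB', hex'⟩
                  · exact hcovD c hc c' (hAsubD hA')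
                  · exact hcovB c hc c' hB' hex'
                · exact hcovD c hc c' (hDpsubD h')
            have hZDp_disj : Disjoint Z Dp := disjoint_of_rows (by
              intro c hc c' hc'
              have h1 := hZlo c hc
              have h2 := (Finset.mem_filter.1 hc').2
              omega)
            have hc1 := isCS_card_le_neSize hFfin hTZ
            rw [Finset.card_insert_of_notMem hbch,
              Finset.card_union_of_disjoint hZDp_disj] at hc1
            omega
          exact core_aux xb (A.card + B.card) A B (le_refl _)
            ⟨dstar, hdA⟩ hBne hIA hIB hcross hBcol H1 H2
        · push_neg at hys
          exact isCS_card_le_neSize hFfin (trG'2M V hV hys)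
      exact le_antisymm hge hle
  · -- no coupling interference: ne(F) = ne(G)
    left
    apply neSize_eq_of_maps hFfin hGfin
    · intro T hT
      have hsp : ¬((∃ c ∈ T, c.2 = ys) ∧ (∃ c ∈ T, c.2 = yl)) := by
        rintro ⟨⟨c, hc, hcy⟩, ⟨c', hc', hcy'⟩⟩
        apply hC
        refine ⟨c.1, c'.1, ?_, ?_, ?_, ?_⟩
        · have h := hT.1 c hc; rwa [cell_eq_row hcy] at h
        · have h := hT.1 c' hc'; rwa [cell_eq_row hcy'] at h
        · have hcor := hT.2.2 c' hc' c hc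
          rw [hcy] at hcor
          exact hcor
        · have : c.1 < c'.1 := hT.2.1.colLt hc hc' (by omega)
          omega
      obtain ⟨hcs, hcard⟩ := rswap_transfer hadj hNmem hT hsp
      exact ⟨_, hG ▸ hcs, hcard⟩
    · intro T hT
      have hsp : ¬((∃ c ∈ T, c.2 = ys) ∧ (∃ c ∈ T, c.2 = yl)) := by
        rintro ⟨⟨c, hc, hcy⟩, ⟨c', hc', hcy'⟩⟩
        apply hC
        have hcF : (c.1, yl) ∈ F := by
          have h := hT.1 c hc
          rw [hG, mem_rswap_image, cell_eq_row hcy, rswap_snd_ys] at h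
          exact h
        have hc'F : (c'.1, ys) ∈ F := by
          have h := hT.1 c' hc'
          rw [hG, mem_rswap_image, cell_eq_row hcy', rswap_snd_yl hylys] at h
          exact h
        refine ⟨c'.1, c.1, hc'F, hcF, ?_, ?_⟩
        · have hcor := hT.2.2 c hc c' hc'
          rw [hcy'] at hcor
          exact (hNyl c.1).1 hcor
        · have : c.1 < c'.1 := hT.2.1.colLt hc hc' (by omega)
          omega
      obtain ⟨hcs, hcard⟩ := rswap_transfer hadj hMmem hT hsp
      rw [hGF] at hcs
      exact ⟨_, hcs, hcard⟩

end Main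

section Rotation

def negc (c : Cell) : Cell := (-c.1, -c.2)

lemma negc_invol (c : Cell) : negc (negc c) = c := by simp [negc]

lemma negc_inj : Function.Injective negc := by
  intro c c' h
  have := congrArg negc h
  rwa [negc_invol, negc_invol] at this

lemma mem_negc_image {X : Set Cell} {c : Cell} : c ∈ negc '' X ↔ negc c ∈ X := by
  constructor
  · rintro ⟨d, hd, rfl⟩
    rwa [negc_invol]
  · intro h
    exact ⟨negc c, h, negc_invol c⟩

lemma negc_image_invol (X : Set Cell) : negc '' (negc '' X) = X := by
  ext c
  rw [mem_negc_image, mem_negc_image, negc_invol]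

lemma row_negc (P : Set Cell) (y x : ℤ) : x ∈ Row (negc '' P) y ↔ -x ∈ Row P (-y) := by
  show (x, y) ∈ negc '' P ↔ (-x, -y) ∈ P
  rw [mem_negc_image]
  exact Iff.rfl

lemma row_negc_eq (P : Set Cell) (y : ℤ) :
    Row (negc '' P) y = (fun x : ℤ => -x) '' Row P (-y) := by
  ext x
  rw [row_negc]
  constructor
  · intro h
    exact ⟨-x, h, by ring⟩
  · rintro ⟨z, hz, rfl⟩
    rwa [neg_neg]

lemma rowLen_negc (P : Set Cell) (y : ℤ) : rowLen (negc '' P) y = rowLen P (-y) := by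
  unfold rowLen
  rw [row_negc_eq]
  exact Set.ncard_image_of_injective _ neg_injective

lemma exceptional_negc (P : Set Cell) (y : ℤ) :
    ExceptionalRow (negc '' P) y ↔ ExceptionalRow P (-y) := by
  unfold ExceptionalRow
  constructor
  · rintro ⟨⟨y1, hy1, hl1⟩, ⟨y2, hy2, hl2⟩⟩
    rw [rowLen_negc, rowLen_negc] at hl1 hl2
    exact ⟨⟨-y2, by omega, hl2⟩, ⟨-y1, by omega, hl1⟩⟩
  · rintro ⟨⟨y1, hy1, hl1⟩, ⟨y2, hy2, hl2⟩⟩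
    refine ⟨⟨-y2, by omega, ?_⟩, ⟨-y1, by omega, ?_⟩⟩
    · rw [rowLen_negc, rowLen_negc, neg_neg]
      exact hl2
    · rw [rowLen_negc, rowLen_negc, neg_neg]
      exact hl1

lemma isCS_negc {P H : Set Cell} {T : Finset Cell} (h : IsCS P H T) :
    IsCS (negc '' P) (negc '' H) (T.image negc) ∧ (T.image negc).card = T.card := by
  refine ⟨⟨?_, ?_, ?_⟩, Finset.card_image_of_injective _ negc_inj⟩
  · intro c hc
    obtain ⟨d, hd, rfl⟩ := Finset.mem_image.1 hc
    exact ⟨d, h.1 d hd, rfl⟩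
  · intro c hc c' hc'
    obtain ⟨d, hd, rfl⟩ := Finset.mem_image.1 hc
    obtain ⟨d', hd', rfl⟩ := Finset.mem_image.1 hc'
    constructor
    · intro hlt
      have : d'.2 < d.2 := by
        simp only [negc] at hlt
        omega
      have := h.2.1.colLt hd' hd this
      simp only [negc]
      omega
    · intro he
      have : d'.2 = d.2 := by
        simp only [negc] at he
        omega
      rw [h.2.1.rowInj hd hd' this.symm]
  · intro c hc c' hc'
    obtain ⟨d, hd, rfl⟩ := Finset.mem_image.1 hc
    obtain ⟨d', hd', rfl⟩ := Finset.mem_image.1 hc'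
    have : ((negc d).1, (negc d').2) = negc (d.1, d'.2) := rfl
    rw [this]
    exact Set.mem_image_of_mem _ (h.2.2 d hd d' hd')

lemma neSize_negc (P H : Set Cell) (hH : H.Finite) :
    neSize (negc '' P) (negc '' H) = neSize P H := by
  apply neSize_eq_of_maps (hH.image _) hH
  · intro T hT
    have h2 := isCS_negc hT
    rw [negc_image_invol, negc_image_invol] at h2
    exact ⟨_, h2.1, h2.2⟩
  · intro T hT
    have h2 := isCS_negc hT
    exact ⟨_, h2.1, h2.2⟩

lemma negc_rswap (ys yl : ℤ) (c : Cell) :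
    negc (rswap ys yl c) = rswap (-ys) (-yl) (negc c) := by
  apply Prod.ext
  · rfl
  · show -(if c.2 = ys then yl else if c.2 = yl then ys else c.2)
      = (if -c.2 = -ys then -yl else if -c.2 = -yl then -ys else -c.2)
    split_ifs <;> omega

lemma negc_image_rswap (ys yl : ℤ) (X : Set Cell) :
    negc '' (rswap ys yl '' X) = rswap (-ys) (-yl) '' (negc '' X) := by
  rw [← Set.image_comp, ← Set.image_comp]
  apply Set.image_congr
  intro c _
  exact negc_rswap ys yl c

end Rotation


/-- Lemma 4.3 (Lemma \ref{lemma3-1}) of the paper: for a filling `F` of `M` with at most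
one 1 per row, its coupling filling `F'`, and the corresponding fillings
`G = f_{M,N}(F')`, `G' = f_{M,N}(F)` of `N`, one has `ne(F) = ne(G)` or `ne(F) = ne(G')`. -/
theorem coupling_lemma (M N : Set (ℤ × ℤ)) (ys yl : ℤ)
    (hM : AlmostMoon M) (hN : AlmostMoon N)
    (hadj : yl = ys + 1 ∨ ys = yl + 1)
    (hsub : Row M ys ⊆ Row M yl) (hlt : rowLen M ys < rowLen M yl)
    (hNdef : N = rswap ys yl '' M)
    (hexM : ∀ y, ExceptionalRow M y → y = ys ∨ y = yl)
    (hexN : ∀ y, ExceptionalRow N y → y = ys ∨ y = yl)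
    (F : Set (ℤ × ℤ)) (hF : F ⊆ M) (hrow : ∀ y, rowLen F y ≤ 1)
    (F' G G' : Set (ℤ × ℤ))
    (hF' : F' = (fun c => if c.1 ∈ Row M ys then rswap ys yl c else c) '' F)
    (hG : G = fswap (Row M ys) ys yl F')
    (hG' : G' = fswap (Row M ys) ys yl F) :
    neSize M F = neSize N G ∨ neSize M F = neSize N G' := by
  classical
  have hGr : G = rswap ys yl '' F := by
    rw [hG, hF', fswap, ← Set.image_comp]
    apply Set.image_congr
    intro c _
    by_cases hcS : c.1 ∈ Row M ys
    · show (if (if c.1 ∈ Row M ys then rswap ys yl c else c).1 ∈ Row M ys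
          then (if c.1 ∈ Row M ys then rswap ys yl c else c)
          else rswap ys yl (if c.1 ∈ Row M ys then rswap ys yl c else c)) = rswap ys yl c
      rw [if_pos hcS]
      rw [if_pos (show (rswap ys yl c).1 ∈ Row M ys from hcS)]
    · show (if (if c.1 ∈ Row M ys then rswap ys yl c else c).1 ∈ Row M ys
          then (if c.1 ∈ Row M ys then rswap ys yl c else c)
          else rswap ys yl (if c.1 ∈ Row M ys then rswap ys yl c else c)) = rswap ys yl c
      rw [if_neg hcS, if_neg hcS]
  have hG'r : G' = (fun c => if c.1 ∈ Row M ys then c else rswap ys yl c) '' F := by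
    rw [hG', fswap]
  have hFfin : F.Finite := hM.1.subset hF
  have hGfin : G.Finite := by
    rw [hGr]; exact hFfin.image _
  have hG'fin : G'.Finite := by
    rw [hG'r]; exact hFfin.image _
  rcases hadj with h1 | h2
  · exact main_orient M N ys yl hM.1 hM.2.1 hM.2.2.1 h1 hsub hNdef hexM F hF hrow G G'
      hGr hG'r
  · have hconv' : RowConvex (negc '' M) := by
      intro y x₁ x₂ x hx1 hx2 hle1 hle2
      rw [row_negc] at hx1 hx2 ⊢
      exact hM.2.1 (-y) (-x₂) (-x₁) (-x) hx2 hx1 (by omega) (by omega)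
    have hcomp' : RowsComparable (negc '' M) := by
      intro y₁ y₂
      rcases hM.2.2.1 (-y₁) (-y₂) with h | h
      · left
        intro x hx
        rw [row_negc] at hx ⊢
        exact h hx
      · right
        intro x hx
        rw [row_negc] at hx ⊢
        exact h hx
    have hsub' : Row (negc '' M) (-ys) ⊆ Row (negc '' M) (-yl) := by
      intro x hx
      rw [row_negc, neg_neg] at hx ⊢
      exact hsub hx
    have hNdef' : negc '' N = rswap (-ys) (-yl) '' (negc '' M) := by
      rw [hNdef, negc_image_rswap]
    have hexM' : ∀ y, ExceptionalRow (negc '' M) y → y = -ys ∨ y = -yl := by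
      intro y hy
      rw [exceptional_negc] at hy
      rcases hexM _ hy with h | h <;> omega
    have hrow' : ∀ y, rowLen (negc '' F) y ≤ 1 := by
      intro y
      rw [rowLen_negc]
      exact hrow (-y)
    have hGrot : negc '' G = rswap (-ys) (-yl) '' (negc '' F) := by
      rw [hGr, negc_image_rswap]
    have hG'rot : negc '' G' =
        (fun c => if c.1 ∈ Row (negc '' M) (-ys) then c else rswap (-ys) (-yl) c) ''
          (negc '' F) := by
      rw [hG'r, ← Set.image_comp, ← Set.image_comp]
      apply Set.image_congr
      intro c _
      have hiff : (negc c).1 ∈ Row (negc '' M) (-ys) ↔ c.1 ∈ Row M ys := by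
        rw [row_negc, neg_neg]
        show -(-c.1) ∈ Row M ys ↔ _
        rw [neg_neg]
      show negc (if c.1 ∈ Row M ys then c else rswap ys yl c)
          = (if (negc c).1 ∈ Row (negc '' M) (-ys) then negc c
            else rswap (-ys) (-yl) (negc c))
      by_cases h : c.1 ∈ Row M ys
      · rw [if_pos h, if_pos (hiff.2 h)]
      · rw [if_neg h, if_neg (fun hh => h (hiff.1 hh)), negc_rswap]
    have hmain := main_orient (negc '' M) (negc '' N) (-ys) (-yl) (hM.1.image _)
      hconv' hcomp' (by omega) hsub' hNdef' hexM' (negc '' F)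
      (Set.image_mono hF) hrow' (negc '' G) (negc '' G') hGrot hG'rot
    rcases hmain with h | h
    · left
      rwa [neSize_negc M F hFfin, neSize_negc N G hGfin] at h
    · right
      rwa [neSize_negc M F hFfin, neSize_negc N G' hG'fin] at h
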